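/- Let F be a field and M ∈ SL(n, F) such that all anti-leading principal minors of M are non-zero. Then M can be written M = V·Δ·Λ where V is unit upper triangular, Λ is unit lower triangular, and Δ is the diagonal matrix with Δ_{pp} = η_p/η_{p−1}, where η_p = (M(p+1…n | p+1…n))^{−1} for 0 ≤ p ≤ n (with the convention that the empty minor is 1, so η_n appears via M(∅|∅)=1 and η_0 = (det M)^{-1} = 1). Moreover the entries are given by V_{pi} = M(p, i+1, …, n | i, i+1, …, n) · η_{i−1} for p ≤ i and Λ_{ip} = M(i, i+1, …, n | p, i+1, …, n) · η_{i−1} for i ≥ p. -/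

import Mathlib

open Matrix Polynomial

def sumEquiv (k : ℕ) : (Fin 2 ⊕ Fin k) ≃ Fin (k + 2) where
  toFun := Sum.elim (fun a => ⟨a.1, by have := a.2; omega⟩) fun b => ⟨b.1 + 2, by have := b.2; omega⟩
  invFun i := if h : i.1 < 2 then Sum.inl ⟨i.1, h⟩ else Sum.inr ⟨i.1 - 2, by have := i.2; omega⟩
  left_inv x := by
    rcases x with a | b
    · simp; omega
    · simp
  right_inv i := by
    by_cases h : i.1 < 2 <;> simp [h, Fin.ext_iff] <;> omega

lemma jacobi_mul {R : Type*} [CommRing R] {k : ℕ} (T : Matrix (Fin (k + 2)) (Fin (k + 2)) R) :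
    T.det * ((T.submatrix (Fin.succAbove 0) (Fin.succAbove 0)).det *
        (T.submatrix (Fin.succAbove 1) (Fin.succAbove 1)).det -
      (T.submatrix (Fin.succAbove 1) (Fin.succAbove 0)).det *
        (T.submatrix (Fin.succAbove 0) (Fin.succAbove 1)).det) =
    T.det ^ 2 * (T.submatrix (fun l : Fin k => (⟨l.1 + 2, by have := l.2; omega⟩ : Fin (k + 2)))
        (fun l : Fin k => (⟨l.1 + 2, by have := l.2; omega⟩ : Fin (k + 2)))).det := by
  set e := sumEquiv k with he
  set N : Matrix (Fin (k + 2)) (Fin (k + 2)) R :=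
    Matrix.of fun i j => if j.1 < 2 then T.adjugate i j else if i = j then (1 : R) else 0 with hN
  have hadj := T.mul_adjugate
  have key1 : ∀ i j : Fin (k + 2), j.1 < 2 → (T * N) i j = T.det * (if i = j then 1 else 0) := by
    intro i j hj
    have h2 : (T * T.adjugate) i j = (T.det • (1 : Matrix (Fin (k+2)) (Fin (k+2)) R)) i j := by
      rw [hadj]
    rw [Matrix.mul_apply] at h2
    rw [Matrix.mul_apply]
    simp only [hN, Matrix.of_apply, hj, if_true]
    rw [h2]
    simp [Matrix.one_apply]
  have key2 : ∀ i j : Fin (k + 2), ¬ j.1 < 2 → (T * N) i j = T i j := by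
    intro i j hj
    rw [Matrix.mul_apply]
    simp [hN, hj, Matrix.one_apply]
    intro h; omega
  have hTN : (T * N).submatrix e e =
      Matrix.fromBlocks (T.det • (1 : Matrix (Fin 2) (Fin 2) R))
        (Matrix.of fun a b => T (e (Sum.inl a)) (e (Sum.inr b))) 0
        (Matrix.of fun b b' => T (e (Sum.inr b)) (e (Sum.inr b'))) := by
    ext i j
    rcases i with a | b <;> rcases j with a' | b' <;>
      simp only [Matrix.submatrix_apply, Matrix.fromBlocks_apply₁₁, Matrix.fromBlocks_apply₁₂,
        Matrix.fromBlocks_apply₂₁, Matrix.fromBlocks_apply₂₂, Matrix.of_apply]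
    · rw [key1 _ _ (by simp [he, sumEquiv]; omega)]
      simp [Matrix.one_apply, Equiv.apply_eq_iff_eq, Matrix.smul_apply, smul_eq_mul]
    · rw [key2 _ _ (by simp [he, sumEquiv])]
    · rw [key1 _ _ (by simp [he, sumEquiv]; omega)]
      have : e (Sum.inr b) ≠ e (Sum.inl a') := by
        simp [Equiv.apply_eq_iff_eq]
      simp [this]
    · rw [key2 _ _ (by simp [he, sumEquiv])]
  have hNe : N.submatrix e e =
      Matrix.fromBlocks (Matrix.of fun a a' : Fin 2 => T.adjugate (e (Sum.inl a)) (e (Sum.inl a'))) 0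
        (Matrix.of fun b a' => T.adjugate (e (Sum.inr b)) (e (Sum.inl a'))) 1 := by
    ext i j
    rcases i with a | b <;> rcases j with a' | b' <;>
      simp only [Matrix.submatrix_apply, Matrix.fromBlocks_apply₁₁, Matrix.fromBlocks_apply₁₂,
        Matrix.fromBlocks_apply₂₁, Matrix.fromBlocks_apply₂₂, Matrix.of_apply, hN]
    · rw [if_pos (by simp [he, sumEquiv]; omega)]
    · rw [if_neg (by simp [he, sumEquiv])]
      have : e (Sum.inl a) ≠ e (Sum.inr b') := by simp [Equiv.apply_eq_iff_eq]
      simp [this]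
    · rw [if_pos (by simp [he, sumEquiv]; omega)]
    · rw [if_neg (by simp [he, sumEquiv])]
      simp [Equiv.apply_eq_iff_eq, Matrix.one_apply]
  have hinner : (Matrix.of fun b b' => T (e (Sum.inr b)) (e (Sum.inr b'))) =
      T.submatrix (fun l : Fin k => (⟨l.1 + 2, by have := l.2; omega⟩ : Fin (k + 2)))
        (fun l : Fin k => (⟨l.1 + 2, by have := l.2; omega⟩ : Fin (k + 2))) := by
    ext b b'; rfl
  have hdetTN : (T * N).det = T.det ^ 2 *
      (T.submatrix (fun l : Fin k => (⟨l.1 + 2, by have := l.2; omega⟩ : Fin (k + 2)))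
        (fun l : Fin k => (⟨l.1 + 2, by have := l.2; omega⟩ : Fin (k + 2)))).det := by
    rw [← Matrix.det_submatrix_equiv_self e (T * N), hTN, hinner, Matrix.det_fromBlocks_zero₂₁,
      Matrix.det_smul, Matrix.det_one, mul_one]
    norm_num
  have e0 : e (Sum.inl 0) = (0 : Fin (k + 2)) := by ext; simp [he, sumEquiv]
  have e1 : e (Sum.inl 1) = (1 : Fin (k + 2)) := by ext; simp [he, sumEquiv]
  have hdetN : N.det =
      (T.submatrix (Fin.succAbove 0) (Fin.succAbove 0)).det *
        (T.submatrix (Fin.succAbove 1) (Fin.succAbove 1)).det -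
      (T.submatrix (Fin.succAbove 1) (Fin.succAbove 0)).det *
        (T.submatrix (Fin.succAbove 0) (Fin.succAbove 1)).det := by
    rw [← Matrix.det_submatrix_equiv_self e N, hNe, Matrix.det_fromBlocks_zero₁₂,
      Matrix.det_one, mul_one, Matrix.det_fin_two]
    simp only [Matrix.of_apply, e0, e1, Matrix.adjugate_fin_succ_eq_det_submatrix]
    simp [Fin.val_zero, Fin.val_one]
  rw [← hdetN, ← Matrix.det_mul, hdetTN]

lemma jacobi {F : Type*} [Field F] {k : ℕ} (T : Matrix (Fin (k + 2)) (Fin (k + 2)) F) :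
    (T.submatrix (Fin.succAbove 0) (Fin.succAbove 0)).det *
        (T.submatrix (Fin.succAbove 1) (Fin.succAbove 1)).det -
      (T.submatrix (Fin.succAbove 1) (Fin.succAbove 0)).det *
        (T.submatrix (Fin.succAbove 0) (Fin.succAbove 1)).det =
    T.det * (T.submatrix (fun l : Fin k => (⟨l.1 + 2, by have := l.2; omega⟩ : Fin (k + 2)))
        (fun l : Fin k => (⟨l.1 + 2, by have := l.2; omega⟩ : Fin (k + 2)))).det := by
  set T' : Matrix (Fin (k + 2)) (Fin (k + 2)) (Polynomial F) :=
    Matrix.of fun i j => (if i = j then Polynomial.X else 0) + Polynomial.C (T i j) with hT'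
  have hch : T' = Matrix.charmatrix (-T) := by
    ext i j
    by_cases h : i = j <;>
      simp [hT', h, Matrix.charmatrix_apply, Matrix.diagonal_apply, sub_eq_add_neg, map_neg]
  have hdT' : T'.det ≠ 0 := by
    rw [hch]
    exact (Matrix.charpoly_monic (-T)).ne_zero
  have hj := jacobi_mul T'
  rw [pow_two, mul_assoc] at hj
  have hcancel := mul_left_cancel₀ hdT' hj
  set φ := Polynomial.evalRingHom (0 : F) with hφ
  have hmap : ∀ {s : ℕ} (f g : Fin s → Fin (k + 2)), φ ((T'.submatrix f g).det) = (T.submatrix f g).det := by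
    intro s f g
    rw [RingHom.map_det]
    congr 1
    ext a b
    by_cases h : f a = g b <;> simp [hT', h, hφ]
  have hmapT : φ T'.det = T.det := by
    rw [RingHom.map_det]
    congr 1
    ext a b
    by_cases h : a = b <;> simp [hT', h, hφ]
  have := congrArg φ hcancel
  simpa only [map_sub, _root_.map_mul, hmap, hmapT] using this

lemma detcongr {R : Type*} [CommRing R] {n : ℕ} (M : Matrix (Fin n) (Fin n) R)
    {s s' : ℕ} (h : s = s') (r c : Fin s → Fin n) (r' c' : Fin s' → Fin n)
    (hr : ∀ (a : ℕ) (h1 : a < s) (h2 : a < s'), (r ⟨a, h1⟩).1 = (r' ⟨a, h2⟩).1)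
    (hc : ∀ (a : ℕ) (h1 : a < s) (h2 : a < s'), (c ⟨a, h1⟩).1 = (c' ⟨a, h2⟩).1) :
    (M.submatrix r c).det = (M.submatrix r' c').det := by
  subst h
  have hr' : r = r' := funext fun l => Fin.ext (hr l.1 l.2 l.2)
  have hc' : c = c' := funext fun l => Fin.ext (hc l.1 l.2 l.2)
  rw [hr', hc']

def Emin {F : Type*} [Field F] {n : ℕ} (M : Matrix (Fin n) (Fin n) F) (p q : Fin n) (j : ℕ) : F :=
  (M.submatrix
    (fun l : Fin (n + 1 - j) =>
      if l.1 = 0 then p else ⟨j + l.1 - 1, by have := l.2; have := p.2; omega⟩)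
    (fun l : Fin (n + 1 - j) =>
      if l.1 = 0 then q else ⟨j + l.1 - 1, by have := l.2; have := q.2; omega⟩)).det



/-- The anti-leading principal minor of `M` built from rows and columns `q+1,…,n`
(1-indexed), i.e. rows and columns `q,…,n-1` (0-indexed); for `q ≥ n` it is the empty
minor `1`. -/
def antiLeadMinor {F : Type*} [Field F] {n : ℕ} (M : Matrix (Fin n) (Fin n) F)
    (q : ℕ) : F :=
  (M.submatrix (fun l : Fin (n - q) => (⟨q + l.1, by have := l.2; omega⟩ : Fin n))
    (fun l : Fin (n - q) => (⟨q + l.1, by have := l.2; omega⟩ : Fin n))).det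

/-- `η_q = (M(q+1…n | q+1…n))⁻¹`. -/
def etaCoef {F : Type*} [Field F] {n : ℕ} (M : Matrix (Fin n) (Fin n) F) (q : ℕ) : F :=
  (antiLeadMinor M q)⁻¹

/-- The unit upper triangular factor `V`, with
`V_{pi} = M(p, i+1…n | i, i+1…n) · η_{i-1}` for `p ≤ i` (1-indexed). -/
def Vfactor {F : Type*} [Field F] {n : ℕ} (M : Matrix (Fin n) (Fin n) F) :
    Matrix (Fin n) (Fin n) F :=
  Matrix.of fun p i : Fin n =>
    if p.1 ≤ i.1 then
      (M.submatrix
        (fun l : Fin (n - i.1) =>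
          if l.1 = 0 then p else ⟨i.1 + l.1, by have := i.2; have := l.2; omega⟩)
        (fun l : Fin (n - i.1) =>
          (⟨i.1 + l.1, by have := i.2; have := l.2; omega⟩ : Fin n))).det * etaCoef M i.1
    else 0

/-- The unit lower triangular factor `Λ`, with
`Λ_{ip} = M(i, i+1…n | p, i+1…n) · η_{i-1}` for `i ≥ p` (1-indexed). -/
def Lfactor {F : Type*} [Field F] {n : ℕ} (M : Matrix (Fin n) (Fin n) F) :
    Matrix (Fin n) (Fin n) F :=
  Matrix.of fun i p : Fin n =>
    if p.1 ≤ i.1 then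
      (M.submatrix
        (fun l : Fin (n - i.1) =>
          (⟨i.1 + l.1, by have := i.2; have := l.2; omega⟩ : Fin n))
        (fun l : Fin (n - i.1) =>
          if l.1 = 0 then p else ⟨i.1 + l.1, by have := i.2; have := l.2; omega⟩)).det
        * etaCoef M i.1
    else 0

/-- The diagonal factor `Δ = diag(η₁/η₀, η₂/η₁, …, η_n/η_{n-1})`. -/
def Dfactor {F : Type*} [Field F] {n : ℕ} (M : Matrix (Fin n) (Fin n) F) :
    Matrix (Fin n) (Fin n) F :=
  Matrix.diagonal fun q : Fin n => etaCoef M (q.1 + 1) / etaCoef M q.1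


lemma antiLeadMinor_self {F : Type*} [Field F] {n : ℕ} (M : Matrix (Fin n) (Fin n) F) :
    antiLeadMinor M n = 1 := by
  unfold antiLeadMinor
  rw [detcongr M (show n - n = 0 by omega) _ _ (fun l : Fin 0 => l.elim0) (fun l : Fin 0 => l.elim0)
    (by intro a h1 h2; omega) (by intro a h1 h2; omega)]
  exact Matrix.det_fin_zero

lemma Emin_n {F : Type*} [Field F] {n : ℕ} (M : Matrix (Fin n) (Fin n) F) (p q : Fin n) :
    Emin M p q n = M p q := by
  unfold Emin
  rw [detcongr M (show n + 1 - n = 1 by omega) _ _ (fun _ : Fin 1 => p) (fun _ : Fin 1 => q)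
    ?_ ?_]
  · rw [Matrix.det_fin_one]
    rfl
  · intro a h1 h2
    have ha : a = 0 := by omega
    subst ha
    simp
  · intro a h1 h2
    have ha : a = 0 := by omega
    subst ha
    simp

lemma Vdiag {F : Type*} [Field F] {n : ℕ} (M : Matrix (Fin n) (Fin n) F)
    (hminor : ∀ q : ℕ, antiLeadMinor M q ≠ 0) (p : Fin n) : Vfactor M p p = 1 := by
  simp only [Vfactor, Matrix.of_apply, le_refl, if_true]
  rw [detcongr M rfl _ _
    (fun l : Fin (n - p.1) => (⟨p.1 + l.1, by have := p.2; have := l.2; omega⟩ : Fin n))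
    (fun l : Fin (n - p.1) => (⟨p.1 + l.1, by have := p.2; have := l.2; omega⟩ : Fin n))
    (by intro a h1 h2; by_cases ha : a = 0 <;> simp [ha])
    (by intro a h1 h2; rfl)]
  exact mul_inv_cancel₀ (hminor p.1)

lemma Ldiag {F : Type*} [Field F] {n : ℕ} (M : Matrix (Fin n) (Fin n) F)
    (hminor : ∀ q : ℕ, antiLeadMinor M q ≠ 0) (p : Fin n) : Lfactor M p p = 1 := by
  simp only [Lfactor, Matrix.of_apply, le_refl, if_true]
  rw [detcongr M rfl _ _
    (fun l : Fin (n - p.1) => (⟨p.1 + l.1, by have := p.2; have := l.2; omega⟩ : Fin n))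
    (fun l : Fin (n - p.1) => (⟨p.1 + l.1, by have := p.2; have := l.2; omega⟩ : Fin n))
    (by intro a h1 h2; rfl)
    (by intro a h1 h2; by_cases ha : a = 0 <;> simp [ha])]
  exact mul_inv_cancel₀ (hminor p.1)

lemma succAbove_zero_val {k : ℕ} (l : Fin (k + 1)) :
    (((0 : Fin (k + 2)).succAbove l)).1 = l.1 + 1 := by
  simp [Fin.succAbove_zero]

lemma succAbove_one_val {k : ℕ} (l : Fin (k + 1)) :
    (((1 : Fin (k + 2)).succAbove l)).1 = if l.1 = 0 then 0 else l.1 + 1 := by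
  rcases l with ⟨a, ha⟩
  by_cases h : a = 0
  · subst h
    simp [Fin.succAbove, Fin.lt_def]
  · simp [Fin.succAbove, Fin.lt_def, h]

lemma term_eq {F : Type*} [Field F] {n : ℕ} (M : Matrix (Fin n) (Fin n) F)
    (hminor : ∀ q : ℕ, antiLeadMinor M q ≠ 0) (p q i : Fin n) :
    Vfactor M p i * (etaCoef M (i.1 + 1) / etaCoef M i.1) * Lfactor M i q =
      (if i.1 + 1 ≤ max p.1 q.1 then 0 else Emin M p q (i.1 + 1) * (antiLeadMinor M (i.1 + 1))⁻¹)
      - (if i.1 ≤ max p.1 q.1 then 0 else Emin M p q i.1 * (antiLeadMinor M i.1)⁻¹) := by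
  have hpn := p.2
  have hqn := q.2
  have hin := i.2
  rcases lt_trichotomy i.1 (max p.1 q.1) with hlt | heq | hgt
  · rw [if_pos (by omega), if_pos (by omega), sub_zero]
    by_cases hp : i.1 < p.1
    · have hV : Vfactor M p i = 0 := by
        simp only [Vfactor, Matrix.of_apply]
        rw [if_neg (by omega)]
      rw [hV, zero_mul, zero_mul]
    · have hq : i.1 < q.1 := by omega
      have hL : Lfactor M i q = 0 := by
        simp only [Lfactor, Matrix.of_apply]
        rw [if_neg (by omega)]
      rw [hL, mul_zero]
  · rw [if_neg (by omega), if_pos (by omega), sub_zero]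
    by_cases hpq : p.1 ≤ q.1
    · have hiq : i.1 = q.1 := by omega
      have hL : Lfactor M i q = 1 := by
        simp only [Lfactor, Matrix.of_apply]
        rw [if_pos (by omega)]
        rw [detcongr M rfl _ _
          (fun l : Fin (n - i.1) => (⟨i.1 + l.1, by have := l.2; omega⟩ : Fin n))
          (fun l : Fin (n - i.1) => (⟨i.1 + l.1, by have := l.2; omega⟩ : Fin n))
          ?_ ?_]
        · exact mul_inv_cancel₀ (hminor i.1)
        · intro a h1 h2; rfl
        · intro a h1 h2
          by_cases ha : a = 0
          · subst ha; simp; try omega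
          · simp [ha]
      have hV : Vfactor M p i = Emin M p q (i.1 + 1) * (antiLeadMinor M i.1)⁻¹ := by
        simp only [Vfactor, Matrix.of_apply]
        rw [if_pos (by omega)]
        unfold Emin
        rw [detcongr M (show n - i.1 = n + 1 - (i.1 + 1) by omega) _ _
          (fun l : Fin (n + 1 - (i.1 + 1)) =>
            if l.1 = 0 then p else ⟨i.1 + 1 + l.1 - 1, by have := l.2; have := p.2; omega⟩)
          (fun l : Fin (n + 1 - (i.1 + 1)) =>
            if l.1 = 0 then q else ⟨i.1 + 1 + l.1 - 1, by have := l.2; have := q.2; omega⟩)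
          ?_ ?_]
        · rfl
        · intro a h1 h2
          by_cases ha : a = 0
          · subst ha; simp
          · simp [ha]; try omega
        · intro a h1 h2
          by_cases ha : a = 0
          · subst ha; simp; try omega
          · simp [ha]; try omega
      rw [hV, hL, mul_one]
      simp only [etaCoef]
      have ha := hminor i.1
      have hb := hminor (i.1 + 1)
      field_simp
      try ring
    · have hip : i.1 = p.1 := by omega
      have hV : Vfactor M p i = 1 := by
        simp only [Vfactor, Matrix.of_apply]
        rw [if_pos (by omega)]
        rw [detcongr M rfl _ _
          (fun l : Fin (n - i.1) => (⟨i.1 + l.1, by have := l.2; omega⟩ : Fin n))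
          (fun l : Fin (n - i.1) => (⟨i.1 + l.1, by have := l.2; omega⟩ : Fin n))
          ?_ ?_]
        · exact mul_inv_cancel₀ (hminor i.1)
        · intro a h1 h2
          by_cases ha : a = 0
          · subst ha; simp; try omega
          · simp [ha]
        · intro a h1 h2; rfl
      have hL : Lfactor M i q = Emin M p q (i.1 + 1) * (antiLeadMinor M i.1)⁻¹ := by
        simp only [Lfactor, Matrix.of_apply]
        rw [if_pos (by omega)]
        unfold Emin
        rw [detcongr M (show n - i.1 = n + 1 - (i.1 + 1) by omega) _ _
          (fun l : Fin (n + 1 - (i.1 + 1)) =>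
            if l.1 = 0 then p else ⟨i.1 + 1 + l.1 - 1, by have := l.2; have := p.2; omega⟩)
          (fun l : Fin (n + 1 - (i.1 + 1)) =>
            if l.1 = 0 then q else ⟨i.1 + 1 + l.1 - 1, by have := l.2; have := q.2; omega⟩)
          ?_ ?_]
        · rfl
        · intro a h1 h2
          by_cases ha : a = 0
          · subst ha; simp; try omega
          · simp [ha]; try omega
        · intro a h1 h2
          by_cases ha : a = 0
          · subst ha; simp
          · simp [ha]; try omega
      rw [hV, hL, one_mul]
      simp only [etaCoef]
      have ha := hminor i.1
      have hb := hminor (i.1 + 1)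
      field_simp
      try ring
  · rw [if_neg (by omega), if_neg (by omega)]
    obtain ⟨k, hk⟩ : ∃ k, n + 1 - i.1 = k + 2 := ⟨n - 1 - i.1, by omega⟩
    set R : Fin (k + 2) → Fin n :=
      fun l => if l.1 = 0 then p else ⟨i.1 + l.1 - 1, by have := l.2; omega⟩ with hRdef
    set C : Fin (k + 2) → Fin n :=
      fun l => if l.1 = 0 then q else ⟨i.1 + l.1 - 1, by have := l.2; omega⟩ with hCdef
    have hvalR : ∀ x : Fin (k + 2), (R x).1 = if x.1 = 0 then p.1 else i.1 + x.1 - 1 := by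
      intro x
      simp only [hRdef]; split_ifs <;> rfl
    have hvalC : ∀ x : Fin (k + 2), (C x).1 = if x.1 = 0 then q.1 else i.1 + x.1 - 1 := by
      intro x
      simp only [hCdef]; split_ifs <;> rfl
    have hJ := jacobi (M.submatrix R C)
    rw [Matrix.submatrix_submatrix, Matrix.submatrix_submatrix, Matrix.submatrix_submatrix,
      Matrix.submatrix_submatrix, Matrix.submatrix_submatrix] at hJ
    have E1 : (M.submatrix (R ∘ Fin.succAbove 0) (C ∘ Fin.succAbove 0)).det
        = antiLeadMinor M i.1 := by
      unfold antiLeadMinor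
      apply detcongr M (show k + 1 = n - i.1 by omega)
      · intro a h1 h2
        simp only [Function.comp_apply, hvalR, succAbove_zero_val]
        split_ifs <;> first | exact absurd rfl (by omega) | exact (False.elim ‹False›) | omega | (simp; omega) | simp | (simp; try omega)
      · intro a h1 h2
        simp only [Function.comp_apply, hvalC, succAbove_zero_val]
        split_ifs <;> first | exact absurd rfl (by omega) | exact (False.elim ‹False›) | omega | (simp; omega) | simp | (simp; try omega)
    have E2 : (M.submatrix (R ∘ Fin.succAbove 1) (C ∘ Fin.succAbove 1)).det
        = Emin M p q (i.1 + 1) := by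
      unfold Emin
      apply detcongr M (show k + 1 = n + 1 - (i.1 + 1) by omega)
      · intro a h1 h2
        simp only [Function.comp_apply, hvalR, succAbove_one_val]
        split_ifs <;> first | exact absurd rfl (by omega) | exact (False.elim ‹False›) | omega | (simp; omega) | simp | (simp; try omega)
      · intro a h1 h2
        simp only [Function.comp_apply, hvalC, succAbove_one_val]
        split_ifs <;> first | exact absurd rfl (by omega) | exact (False.elim ‹False›) | omega | (simp; omega) | simp | (simp; try omega)
    have E5 : (M.submatrix
          (R ∘ fun l : Fin k => (⟨l.1 + 2, by have := l.2; omega⟩ : Fin (k + 2)))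
          (C ∘ fun l : Fin k => (⟨l.1 + 2, by have := l.2; omega⟩ : Fin (k + 2)))).det
        = antiLeadMinor M (i.1 + 1) := by
      unfold antiLeadMinor
      apply detcongr M (show k = n - (i.1 + 1) by omega)
      · intro a h1 h2
        simp only [Function.comp_apply, hvalR]
        split_ifs <;> first | exact absurd rfl (by omega) | exact (False.elim ‹False›) | omega | (simp; omega) | simp | (simp; try omega)
      · intro a h1 h2
        simp only [Function.comp_apply, hvalC]
        split_ifs <;> first | exact absurd rfl (by omega) | exact (False.elim ‹False›) | omega | (simp; omega) | simp | (simp; try omega)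
    have E6 : (M.submatrix R C).det = Emin M p q i.1 := by
      unfold Emin
      apply detcongr M (show k + 2 = n + 1 - i.1 by omega)
      · intro a h1 h2
        simp only [hvalR]
        split_ifs <;> first | exact absurd rfl (by omega) | exact (False.elim ‹False›) | omega | (simp; omega) | simp | (simp; try omega)
      · intro a h1 h2
        simp only [hvalC]
        split_ifs <;> first | exact absurd rfl (by omega) | exact (False.elim ‹False›) | omega | (simp; omega) | simp | (simp; try omega)
    have hV : Vfactor M p i =
        (M.submatrix (R ∘ Fin.succAbove 1) (C ∘ Fin.succAbove 0)).det
          * (antiLeadMinor M i.1)⁻¹ := by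
      simp only [Vfactor, Matrix.of_apply]
      rw [if_pos (by omega)]
      congr 1
      apply detcongr M (show n - i.1 = k + 1 by omega)
      · intro a h1 h2
        simp only [Function.comp_apply, hvalR, succAbove_one_val]
        split_ifs <;> first | exact absurd rfl (by omega) | exact (False.elim ‹False›) | omega | (simp; omega) | simp | (simp; try omega)
      · intro a h1 h2
        simp only [Function.comp_apply, hvalC, succAbove_zero_val]
        split_ifs <;> first | exact absurd rfl (by omega) | exact (False.elim ‹False›) | omega | (simp; omega) | simp | (simp; try omega)
    have hL : Lfactor M i q =
        (M.submatrix (R ∘ Fin.succAbove 0) (C ∘ Fin.succAbove 1)).det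
          * (antiLeadMinor M i.1)⁻¹ := by
      simp only [Lfactor, Matrix.of_apply]
      rw [if_pos (by omega)]
      congr 1
      apply detcongr M (show n - i.1 = k + 1 by omega)
      · intro a h1 h2
        simp only [Function.comp_apply, hvalR, succAbove_zero_val]
        split_ifs <;> first | exact absurd rfl (by omega) | exact (False.elim ‹False›) | omega | (simp; omega) | simp | (simp; try omega)
      · intro a h1 h2
        simp only [Function.comp_apply, hvalC, succAbove_one_val]
        split_ifs <;> first | exact absurd rfl (by omega) | exact (False.elim ‹False›) | omega | (simp; omega) | simp | (simp; try omega)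
    rw [E1, E2, E5, E6] at hJ
    rw [hV, hL]
    simp only [etaCoef]
    have ha := hminor i.1
    have hb := hminor (i.1 + 1)
    field_simp
    simp only [Fin.succAbove_zero] at hJ ⊢
    linear_combination -hJ

theorem stmt_8 {F : Type*} [Field F] {n : ℕ}
    (M : Matrix (Fin n) (Fin n) F) (hdet : M.det = 1)
    (hminor : ∀ q : ℕ, antiLeadMinor M q ≠ 0) :
    (∀ p, Vfactor M p p = 1) ∧ (∀ p, Lfactor M p p = 1) ∧
    M = Vfactor M * Dfactor M * Lfactor M := by
  refine ⟨Vdiag M hminor, Ldiag M hminor, ?_⟩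
  ext p q
  have hpn := p.2
  have hqn := q.2
  set G : ℕ → F := fun j =>
    if j ≤ max p.1 q.1 then 0 else Emin M p q j * (antiLeadMinor M j)⁻¹ with hG
  have hGval : ∀ j, G j = if j ≤ max p.1 q.1 then 0
      else Emin M p q j * (antiLeadMinor M j)⁻¹ := fun _ => rfl
  calc M p q = G n - G 0 := by
        rw [hGval, hGval, if_neg (by omega), if_pos (by omega), sub_zero,
          Emin_n, antiLeadMinor_self, inv_one, mul_one]
    _ = ∑ j ∈ Finset.range n, (G (j + 1) - G j) := (Finset.sum_range_sub G n).symm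
    _ = ∑ i : Fin n, (G (i.1 + 1) - G i.1) :=
        (Fin.sum_univ_eq_sum_range (fun j => G (j + 1) - G j) n).symm
    _ = ∑ i : Fin n,
          Vfactor M p i * (etaCoef M (i.1 + 1) / etaCoef M i.1) * Lfactor M i q := by
        refine Finset.sum_congr rfl fun i _ => ?_
        rw [term_eq M hminor p q i, hGval, hGval]
    _ = (Vfactor M * Dfactor M * Lfactor M) p q := by
        rw [Matrix.mul_apply]
        refine Finset.sum_congr rfl fun i _ => ?_
        rw [Dfactor, Matrix.mul_diagonal]
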